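/- arXiv:2202.09296 — 2 statements merged into one kernel-verified Lean document; each statement's English description precedes it below -/
import Mathlib

section
/- Let m ≥ 3 and n ≥ 1 be integers. Let a = (a_1, …, a_k) be a finite sequence of integers, each at least n, and let g ∈ T(n) be an integer with g ∉ R'(a). Let b ≥ n be an integer such that g ∈ R'(a ⌢ (b)), where a ⌢ (b) is the sequence a with the additional coefficient b appended. Then either n ≤ b ≤ g − n or b = g. -/
/-- `s` is a generalized `m`-gonal number, i.e. `s = ((m-2)u^2 - (m-4)u)/2` for some `u ∈ ℤ`. -/
def IsGP (m s : ℤ) : Prop := ∃ u : ℤ, 2 * s = (m - 2) * u ^ 2 - (m - 4) * u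

/-- `R'(a)`: the set of nonzero integers represented by the `m`-gonal form with
coefficient sequence `a`, i.e. expressible as `a₁s₁ + ⋯ + aₖsₖ` with each `sᵢ ∈ GP_m`. -/
def Rset (m : ℤ) (a : List ℤ) : Set ℤ :=
  {x | x ≠ 0 ∧ ∃ s : List ℤ, s.length = a.length ∧ (∀ y ∈ s, IsGP m y) ∧
      x = (List.zipWith (· * ·) a s).sum}

lemma isGP_nonneg {m s : ℤ} (hm : 3 ≤ m) (h : IsGP m s) : 0 ≤ s := by
  obtain ⟨u, hu⟩ := h
  rcases lt_trichotomy u 0 with h0 | h0 | h0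
  · have h1 : u ≤ -1 := by omega
    nlinarith [sq_nonneg (u + 1), mul_nonneg (by linarith : (0:ℤ) ≤ m - 3)
      (by linarith : (0:ℤ) ≤ -u - 1)]
  · subst h0; simp at hu; linarith
  · have h1 : 1 ≤ u := h0
    nlinarith [mul_nonneg (by linarith : (0:ℤ) ≤ m - 3)
      (mul_nonneg (by linarith : (0:ℤ) ≤ u) (by linarith : (0:ℤ) ≤ u - 1))]

lemma sum_zip (n : ℤ) (hn : 1 ≤ n) : ∀ (a s : List ℤ), (∀ x ∈ a, n ≤ x) → (∀ y ∈ s, 0 ≤ y) →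
    0 ≤ (List.zipWith (· * ·) a s).sum ∧
    ((List.zipWith (· * ·) a s).sum = 0 ∨ n ≤ (List.zipWith (· * ·) a s).sum)
  | [], s, _, _ => by simp
  | a :: as, [], _, _ => by simp
  | a :: as, x :: xs, ha, hs => by
    have ih := sum_zip n hn as xs (fun y hy => ha y (List.mem_cons_of_mem _ hy))
      (fun y hy => hs y (List.mem_cons_of_mem _ hy))
    have ha0 : n ≤ a := ha a List.mem_cons_self
    have hx0 : 0 ≤ x := hs x List.mem_cons_self
    simp only [List.zipWith_cons_cons, List.sum_cons]
    constructor
    · have : 0 ≤ a * x := mul_nonneg (by linarith) hx0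
      linarith [ih.1]
    · rcases eq_or_lt_of_le hx0 with hx | hx
      · rcases ih.2 with h | h
        · left; rw [← hx, h]; ring
        · right; rw [← hx]; simpa using h
      · right
        have hx1 : 1 ≤ x := hx
        have : n ≤ a * x := by nlinarith
        linarith [ih.1]

/-- If all coefficients of `a` are `≥ n`, `g ∈ T(n)` is not represented by `a`, and
appending a coefficient `b ≥ n` makes `g` represented, then `n ≤ b ≤ g - n` or `b = g`. -/
theorem escalator_range (m n : ℤ) (hm : 3 ≤ m) (hn : 1 ≤ n)
    (a : List ℤ) (ha : ∀ x ∈ a, n ≤ x)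
    (g : ℤ) (hgT : n ≤ g) (hgnot : g ∉ Rset m a)
    (b : ℤ) (hb : n ≤ b) (hrep : g ∈ Rset m (a ++ [b])) :
    (n ≤ b ∧ b ≤ g - n) ∨ b = g := by
  obtain ⟨hg0, s, hlen, hGP, heq⟩ := hrep
  rw [List.length_append, List.length_singleton] at hlen
  set s1 := s.take a.length with hs1
  have hsplit : s = s1 ++ s.drop a.length := (List.take_append_drop _ _).symm
  have hlen1 : s1.length = a.length := by
    rw [hs1, List.length_take]; omega
  have hlen2 : (s.drop a.length).length = 1 := by rw [List.length_drop]; omega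
  obtain ⟨t, ht⟩ := List.length_eq_one_iff.mp hlen2
  rw [ht] at hsplit
  have hzip : List.zipWith (· * ·) (a ++ [b]) s
      = List.zipWith (· * ·) a s1 ++ [b * t] := by
    rw [hsplit, List.zipWith_append (h := hlen1.symm)]; simp
  rw [hzip, List.sum_append, List.sum_singleton] at heq
  have hGP1 : ∀ y ∈ s1, IsGP m y := fun y hy => hGP y (by rw [hsplit]; exact List.mem_append_left _ hy)
  have hGPt : IsGP m t := hGP t (by rw [hsplit]; simp)
  have ht0 : 0 ≤ t := isGP_nonneg hm hGPt
  have hs1nn : ∀ y ∈ s1, 0 ≤ y := fun y hy => isGP_nonneg hm (hGP1 y hy)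
  obtain ⟨hA0, hAcase⟩ := sum_zip n hn a s1 ha hs1nn
  set A := (List.zipWith (· * ·) a s1).sum with hA
  rcases eq_or_lt_of_le ht0 with ht1 | ht1
  · -- t = 0 : contradiction
    exfalso
    apply hgnot
    exact ⟨hg0, s1, hlen1, hGP1, by rw [heq, ← ht1]; ring⟩
  · have ht1' : 1 ≤ t := ht1
    rcases hAcase with hA1 | hA1
    · -- A = 0, g = b * t
      rcases eq_or_lt_of_le ht1' with ht2 | ht2
      · right
        rw [heq, hA1, ← ht2]; ring
      · left
        refine ⟨hb, ?_⟩
        have ht2' : 2 ≤ t := ht2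
        nlinarith
    · -- A ≥ n
      left
      refine ⟨hb, ?_⟩
      nlinarith
end

section
/- Let m ≥ 3 be an integer with m ≠ 5 and let n ≥ 2 be an integer. Then for every integer g with n ≤ g ≤ 2n, there exists a finite sequence b of positive integers such that R'(b) = T(n) \ {g}. -/
def RepL (m : ℤ) (a : List ℤ) (x : ℤ) : Prop :=
  ∃ s : List ℤ, s.length = a.length ∧ (∀ y ∈ s, IsGP m y) ∧ x = (List.zipWith (· * ·) a s).sum

def NNlist (n g : ℤ) : List ℤ :=
  ((List.range (n.toNat + 1)).map (fun i : ℕ => n + 1 + (i:ℤ))).filter (fun v => v ≠ g)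

lemma isGP_zero (m : ℤ) : IsGP m 0 := ⟨0, by ring⟩
lemma isGP_one (m : ℤ) : IsGP m 1 := ⟨1, by ring⟩

lemma isGP_cases {m s : ℤ} (hm : 3 ≤ m) (hm5 : m ≠ 5) (h : IsGP m s) :
    s = 0 ∨ s = 1 ∨ 3 ≤ s := by
  obtain ⟨u, hu⟩ := h
  rcases (by omega : u = 0 ∨ u = 1 ∨ u = -1 ∨ u = -2 ∨ 2 ≤ u ∨ u ≤ -3) with h|h|h|h|h|h
  · subst h; norm_num at hu; omega
  · subst h; ring_nf at hu; omega
  · subst h; ring_nf at hu; omega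
  · subst h; ring_nf at hu; omega
  · have h6 : 6 ≤ 2 * s := by nlinarith [mul_nonneg (by linarith : (0:ℤ) ≤ m - 3) (mul_nonneg (by linarith : (0:ℤ) ≤ u) (by linarith : (0:ℤ) ≤ u - 1)), mul_nonneg (by linarith : (0:ℤ) ≤ u - 1) (by linarith : (0:ℤ) ≤ u - 2)]
    omega
  · have h6 : 6 ≤ 2 * s := by nlinarith [mul_nonneg (by linarith : (0:ℤ) ≤ m - 3) (mul_nonneg (by linarith : (0:ℤ) ≤ -u) (by linarith : (0:ℤ) ≤ -u + 1)), mul_nonneg (by linarith : (0:ℤ) ≤ -u - 2) (by linarith : (0:ℤ) ≤ -u - 3)]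
    omega

lemma exists_gp (m u : ℤ) : ∃ y, IsGP m y ∧ 2 * y = (m-2)*u^2 - (m-4)*u := by
  have h : ∃ y : ℤ, 2 * y = (m-2)*u^2 - (m-4)*u := by
    obtain ⟨w, hw⟩ | ⟨w, hw⟩ := Int.even_or_odd u
    · exact ⟨2*(m-2)*w^2 - (m-4)*w, by subst hw; ring⟩
    · exact ⟨(m-2)*(2*w^2+2*w) - (m-4)*w + 1, by subst hw; ring⟩
  obtain ⟨y, hy⟩ := h
  exact ⟨y, ⟨u, hy⟩, hy⟩

lemma ft_pair (p r q s Q : ℤ)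
    (h : (2*p+1)^2 + (2*r)^2 + (2*q+1)^2 + (2*s)^2 = 4*Q + 2) :
    ∃ x1 x2 x3 x4 : ℤ, x1^2+x1 + (x2^2+x2) + (x3^2+x3) + (x4^2+x4) = 2*Q := by
  refine ⟨p+r, p-r, q+s, q-s, ?_⟩
  have h2 : 2*((p+r)^2+(p+r) + ((p-r)^2+(p-r)) + ((q+s)^2+(q+s)) + ((q-s)^2+(q-s))) = 2*(2*Q) := by linear_combination h
  linarith

lemma four_tri (Q : ℤ) (hQ : 0 ≤ Q) :
    ∃ x1 x2 x3 x4 : ℤ, x1^2+x1 + (x2^2+x2) + (x3^2+x3) + (x4^2+x4) = 2*Q := by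
  obtain ⟨a, b, c, d, habcd⟩ := Nat.sum_four_squares (2*(2*Q+1)).toNat
  have h : (a:ℤ)^2 + (b:ℤ)^2 + (c:ℤ)^2 + (d:ℤ)^2 = 4*Q + 2 := by
    have h2 := congrArg (Nat.cast : ℕ → ℤ) habcd
    push_cast at h2
    rw [Int.toNat_of_nonneg (by omega)] at h2
    linarith
  rcases Int.even_or_odd (a:ℤ) with ⟨a2, ha⟩ | ⟨a2, ha⟩ <;>
  rcases Int.even_or_odd (b:ℤ) with ⟨b2, hb⟩ | ⟨b2, hb⟩ <;>
  rcases Int.even_or_odd (c:ℤ) with ⟨c2, hc⟩ | ⟨c2, hc⟩ <;>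
  rcases Int.even_or_odd (d:ℤ) with ⟨d2, hd⟩ | ⟨d2, hd⟩ <;>
  rw [ha, hb, hc, hd] at h
  -- 16 cases, order: (E,E,E,E),(E,E,E,O),(E,E,O,E),(E,E,O,O),(E,O,E,E),...
  · exfalso; obtain ⟨E, hE⟩ : ∃ E : ℤ, 4*E + 0 = 4*Q + 2 := ⟨a2^2+b2^2+c2^2+d2^2, by linear_combination h⟩; omega
  · exfalso; obtain ⟨E, hE⟩ : ∃ E : ℤ, 4*E + 1 = 4*Q + 2 := ⟨a2^2+b2^2+c2^2+d2^2+d2, by linear_combination h⟩; omega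
  · exfalso; obtain ⟨E, hE⟩ : ∃ E : ℤ, 4*E + 1 = 4*Q + 2 := ⟨a2^2+b2^2+c2^2+c2+d2^2, by linear_combination h⟩; omega
  · exact ft_pair c2 a2 d2 b2 Q (by linear_combination h)
  · exfalso; obtain ⟨E, hE⟩ : ∃ E : ℤ, 4*E + 1 = 4*Q + 2 := ⟨a2^2+b2^2+b2+c2^2+d2^2, by linear_combination h⟩; omega
  · exact ft_pair b2 a2 d2 c2 Q (by linear_combination h)
  · exact ft_pair b2 a2 c2 d2 Q (by linear_combination h)
  · exfalso; obtain ⟨E, hE⟩ : ∃ E : ℤ, 4*E + 3 = 4*Q + 2 := ⟨a2^2+b2^2+b2+c2^2+c2+d2^2+d2, by linear_combination h⟩; omega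
  · exfalso; obtain ⟨E, hE⟩ : ∃ E : ℤ, 4*E + 1 = 4*Q + 2 := ⟨a2^2+a2+b2^2+c2^2+d2^2, by linear_combination h⟩; omega
  · exact ft_pair a2 b2 d2 c2 Q (by linear_combination h)
  · exact ft_pair a2 b2 c2 d2 Q (by linear_combination h)
  · exfalso; obtain ⟨E, hE⟩ : ∃ E : ℤ, 4*E + 3 = 4*Q + 2 := ⟨a2^2+a2+b2^2+c2^2+c2+d2^2+d2, by linear_combination h⟩; omega
  · exact ft_pair a2 c2 b2 d2 Q (by linear_combination h)
  · exfalso; obtain ⟨E, hE⟩ : ∃ E : ℤ, 4*E + 3 = 4*Q + 2 := ⟨a2^2+a2+b2^2+b2+c2^2+d2^2+d2, by linear_combination h⟩; omega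
  · exfalso; obtain ⟨E, hE⟩ : ∃ E : ℤ, 4*E + 3 = 4*Q + 2 := ⟨a2^2+a2+b2^2+b2+c2^2+c2+d2^2, by linear_combination h⟩; omega
  · exfalso; obtain ⟨E, hE⟩ : ∃ E : ℤ, 4*E + 4 = 4*Q + 2 := ⟨a2^2+a2+b2^2+b2+c2^2+c2+d2^2+d2, by linear_combination h⟩; omega

lemma gp_sum_all (m : ℤ) (hm : 3 ≤ m) (k : ℕ) (hk : 2*m + 3 ≤ (k:ℤ)) (M : ℤ) (hM : 0 ≤ M) :
    ∃ l : List ℤ, l.length = k ∧ (∀ y ∈ l, IsGP m y) ∧ l.sum = M := by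
  rcases le_or_gt M 3 with h3 | h4
  · refine ⟨List.replicate M.toNat 1 ++ List.replicate (k - M.toNat) 0, ?_, ?_, ?_⟩
    · simp only [List.length_append, List.length_replicate]; omega
    · intro y hy
      rcases List.mem_append.1 hy with hy | hy <;>
        rw [List.eq_of_mem_replicate hy]
      exacts [isGP_one m, isGP_zero m]
    · simp only [List.sum_append, List.sum_replicate, nsmul_eq_mul, mul_one, mul_zero, add_zero]
      omega
  · set D := 2*(m-2) with hD
    have hD0 : 0 < D := by omega
    set t := (M - 4) % D with ht'
    set Q := (M - 4) / D with hQ'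
    have ht1 : 0 ≤ t := Int.emod_nonneg _ (by omega)
    have ht2 : t < D := Int.emod_lt_of_pos _ hD0
    have hQ0 : 0 ≤ Q := Int.ediv_nonneg (by omega) (by omega)
    have hMD : D * Q + t = M - 4 := Int.mul_ediv_add_emod (M-4) D
    obtain ⟨x1, x2, x3, x4, hx⟩ := four_tri Q hQ0
    obtain ⟨y1, hy1, hy1'⟩ := exists_gp m (-x1)
    obtain ⟨z1, hz1, hz1'⟩ := exists_gp m (x1+1)
    obtain ⟨y2, hy2, hy2'⟩ := exists_gp m (-x2)
    obtain ⟨z2, hz2, hz2'⟩ := exists_gp m (x2+1)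
    obtain ⟨y3, hy3, hy3'⟩ := exists_gp m (-x3)
    obtain ⟨z3, hz3, hz3'⟩ := exists_gp m (x3+1)
    obtain ⟨y4, hy4, hy4'⟩ := exists_gp m (-x4)
    obtain ⟨z4, hz4, hz4'⟩ := exists_gp m (x4+1)
    have hsum8 : y1+z1+y2+z2+y3+z3+y4+z4 = (m-2)*(2*Q) + 4 := by
      have h2 : 2*(y1+z1+y2+z2+y3+z3+y4+z4) = 2*((m-2)*(2*Q) + 4) := by
        linear_combination hy1' + hz1' + hy2' + hz2' + hy3' + hz3' + hy4' + hz4' + (2*(m-2))*hx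
      linarith
    refine ⟨[y1,z1,y2,z2,y3,z3,y4,z4] ++ List.replicate t.toNat 1 ++ List.replicate (k - 8 - t.toNat) 0, ?_, ?_, ?_⟩
    · simp only [List.length_append, List.length_replicate, List.length_cons, List.length_nil]
      omega
    · intro y hy
      simp only [List.mem_append, List.mem_cons, List.not_mem_nil, or_false,
        List.mem_replicate] at hy
      rcases hy with ((h|h|h|h|h|h|h|h)|⟨-,h⟩)|⟨-,h⟩
      · exact h ▸ hy1
      · exact h ▸ hz1
      · exact h ▸ hy2
      · exact h ▸ hz2
      · exact h ▸ hy3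
      · exact h ▸ hz3
      · exact h ▸ hy4
      · exact h ▸ hz4
      · exact h ▸ isGP_one m
      · exact h ▸ isGP_zero m
    · simp only [List.sum_append, List.sum_replicate, nsmul_eq_mul, mul_one, mul_zero, add_zero,
        List.sum_cons, List.sum_nil]
      have htn : (t.toNat : ℤ) = t := Int.toNat_of_nonneg ht1
      have hDQ : D * Q = (m-2)*(2*Q) := by rw [hD]; ring
      omega

lemma zip_repl (v : ℤ) : ∀ (l : List ℤ), (List.zipWith (· * ·) (List.replicate l.length v) l).sum = v * l.sum := by
  intro l
  induction l with
  | nil => simp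
  | cons a l ih => simp only [List.length_cons, List.replicate_succ, List.zipWith_cons_cons,
      List.sum_cons, ih, List.sum_cons]; ring

lemma repL_zero (m : ℤ) (a : List ℤ) : RepL m a 0 := by
  refine ⟨List.replicate a.length 0, by simp, ?_, ?_⟩
  · intro y hy; rw [List.eq_of_mem_replicate hy]; exact isGP_zero m
  · induction a with
    | nil => simp
    | cons v a ih => simpa [List.replicate_succ] using ih

lemma repL_append {m : ℤ} {a b : List ℤ} {x y : ℤ} (ha : RepL m a x) (hb : RepL m b y) :
    RepL m (a ++ b) (x + y) := by
  obtain ⟨s1, hl1, hg1, hs1⟩ := ha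
  obtain ⟨s2, hl2, hg2, hs2⟩ := hb
  refine ⟨s1 ++ s2, by simp [hl1, hl2], ?_, ?_⟩
  · intro z hz; rcases List.mem_append.1 hz with h|h
    exacts [hg1 z h, hg2 z h]
  · rw [List.zipWith_append hl1.symm, List.sum_append, hs1, hs2]

lemma repL_replicate (m : ℤ) (hm : 3 ≤ m) (k : ℕ) (hk : 2*m + 3 ≤ (k:ℤ)) (v M : ℤ) (hM : 0 ≤ M) :
    RepL m (List.replicate k v) (v * M) := by
  obtain ⟨l, hl, hgp, hsum⟩ := gp_sum_all m hm k hk M hM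
  refine ⟨l, by simp [hl], hgp, ?_⟩
  have h := zip_repl v l
  rw [hl] at h
  rw [h, hsum]

lemma repL_flatMap (m : ℤ) (hm : 3 ≤ m) (k : ℕ) (hk : 2*m + 3 ≤ (k:ℤ)) (L : List ℤ) (f : ℤ → ℤ)
    (hf : ∀ v ∈ L, 0 ≤ f v) :
    RepL m (L.flatMap (fun v => List.replicate k v)) ((L.map (fun v => v * f v)).sum) := by
  induction L with
  | nil => simpa using repL_zero m []
  | cons v L ih =>
      simp only [List.flatMap_cons, List.map_cons, List.sum_cons]
      exact repL_append (repL_replicate m hm k hk v (f v) (hf v (List.mem_cons_self)))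
        (ih (fun w hw => hf w (List.mem_cons_of_mem v hw)))

lemma arith (n g x : ℤ) (hn : 2 ≤ n) (hg1 : n ≤ g) (hg2 : g ≤ 2*n) (hx : n ≤ x) (hxg : x ≠ g) :
    ∃ e q1 q2 q3 a2 a3 : ℤ, (e = 0 ∨ (e = n ∧ g ≠ n)) ∧ 0 ≤ q1 ∧ 0 ≤ q2 ∧ 0 ≤ q3 ∧
      (n+1 ≤ a2 ∧ a2 ≤ 2*n+1 ∧ a2 ≠ g) ∧ (n+1 ≤ a3 ∧ a3 ≤ 2*n+1 ∧ a3 ≠ g) ∧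
      x = e + q1*(2*n+1) + q2*a2 + q3*a3 := by
  rcases eq_or_ne x n with hxe | hxn
  · exact ⟨n, 0, 0, 0, 2*n+1, 2*n+1, Or.inr ⟨rfl, fun h => hxg (hxe.trans h.symm)⟩, le_refl 0,
      le_refl 0, le_refl 0, ⟨by omega, by omega, by omega⟩, ⟨by omega, by omega, by omega⟩,
      by rw [hxe]; ring⟩
  rcases le_or_gt x (2*n+1) with hx2 | hx3
  · exact ⟨0, 0, 1, 0, x, 2*n+1, Or.inl rfl, le_refl 0, zero_le_one, le_refl 0,
      ⟨by omega, by omega, hxg⟩, ⟨by omega, by omega, by omega⟩, by ring⟩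
  · have h21 : (0:ℤ) < 2*n+1 := by omega
    set q := (x - (2*n+2)) / (2*n+1) with hq
    have hr1 : 0 ≤ (x - (2*n+2)) % (2*n+1) := Int.emod_nonneg _ (by omega)
    have hr2 : (x - (2*n+2)) % (2*n+1) < 2*n+1 := Int.emod_lt_of_pos _ h21
    have hdm : (2*n+1) * q + (x - (2*n+2)) % (2*n+1) = x - (2*n+2) := Int.mul_ediv_add_emod _ _
    have hq0 : 0 ≤ q := Int.ediv_nonneg (by omega) (by omega)
    have hqq : (2*n+1)*q = q*(2*n+1) := mul_comm _ _
    have hrb : 2*n+2 ≤ x - q*(2*n+1) ∧ x - q*(2*n+1) ≤ 4*n+2 := by constructor <;> omega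
    have hp1 : 0 ≤ (x - q*(2*n+1)) % 2 := Int.emod_nonneg _ (by omega)
    have hp2 : (x - q*(2*n+1)) % 2 < 2 := Int.emod_lt_of_pos _ (by omega)
    have hpar : 2 * ((x - q*(2*n+1)) / 2) + (x - q*(2*n+1)) % 2 = x - q*(2*n+1) :=
      Int.mul_ediv_add_emod _ _
    set a := (x - q*(2*n+1)) / 2 with hadef
    by_cases hab : a ≠ g ∧ x - q*(2*n+1) - a ≠ g
    · exact ⟨0, q, 1, 1, a, x - q*(2*n+1) - a, Or.inl rfl, hq0, by omega, by omega,
        ⟨by omega, by omega, hab.1⟩, ⟨by omega, by omega, hab.2⟩, by ring⟩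
    · have hab' : a = g ∨ x - q*(2*n+1) - a = g := by tauto
      rcases le_or_gt (x - q*(2*n+1)) (2*n+3) with hsm | hbig
      · -- r ∈ {2n+2, 2n+3}, g ∈ {n+1, n+2}, use e = n
        refine ⟨n, q, 1, 0, x - q*(2*n+1) - n, 2*n+1,
          Or.inr ⟨rfl, by omega⟩, hq0, by omega, by omega,
          ⟨by omega, by omega, by omega⟩, ⟨by omega, by omega, by omega⟩, by ring⟩
      · rcases le_or_gt (4*n+1) (x - q*(2*n+1)) with hlg | hmid
        · -- r = 4n+1, g = 2n : triple
          have hr41 : x - q*(2*n+1) = 4*n+1 ∧ g = 2*n := by omega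
          exact ⟨0, q, 2, 1, n+1, 2*n-1, Or.inl rfl, hq0, by omega, by omega,
            ⟨by omega, by omega, by omega⟩, ⟨by omega, by omega, by omega⟩,
            by linarith [hr41.1]⟩
        · -- middle: shifted pair (a-1, b+1)
          exact ⟨0, q, 1, 1, a-1, x - q*(2*n+1) - a + 1, Or.inl rfl, hq0, by omega, by omega,
            ⟨by omega, by omega, by omega⟩, ⟨by omega, by omega, by omega⟩, by ring⟩

lemma sum_map_add (L : List ℤ) (F G : ℤ → ℤ) :
    (L.map (fun v => F v + G v)).sum = (L.map F).sum + (L.map G).sum := by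
  induction L with
  | nil => simp
  | cons v L ih => simp [ih]; ring

lemma sum_ind (c a : ℤ) : ∀ (L : List ℤ), L.Nodup → a ∈ L →
    (L.map (fun v => v * (c * (if v = a then 1 else 0)))).sum = c * a := by
  intro L
  induction L with
  | nil => simp
  | cons v L ih =>
      intro hnd hmem
      rcases List.mem_cons.1 hmem with h | hmem'
      · subst h
        simp only [List.map_cons, List.sum_cons, if_pos rfl]
        have hzero : (L.map (fun w => w * (c * (if w = a then 1 else 0)))).sum = 0 := by
          apply List.sum_eq_zero
          intro z hz
          obtain ⟨w, hw, rfl⟩ := List.mem_map.1 hz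
          have hwv : w ≠ a := fun h2 => (List.nodup_cons.1 hnd).1 (h2 ▸ hw)
          simp [hwv]
        rw [hzero]; simp [mul_comm]
      · have hva : v ≠ a := fun h => (List.nodup_cons.1 hnd).1 (h ▸ hmem')
        simp only [List.map_cons, List.sum_cons, if_neg hva]
        rw [ih (List.nodup_cons.1 hnd).2 hmem']; ring

lemma mem_NNlist (n g : ℤ) (hn : 2 ≤ n) (v : ℤ) :
    v ∈ NNlist n g ↔ (n+1 ≤ v ∧ v ≤ 2*n+1 ∧ v ≠ g) := by
  simp only [NNlist, List.mem_filter, List.mem_map, List.mem_range, decide_eq_true_eq]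
  constructor
  · rintro ⟨⟨i, hi, rfl⟩, hne⟩
    refine ⟨by omega, ?_, hne⟩
    omega
  · rintro ⟨h1, h2, hne⟩
    exact ⟨⟨(v - n - 1).toNat, by omega, by omega⟩, hne⟩

lemma nodup_NNlist (n g : ℤ) : (NNlist n g).Nodup := by
  apply List.Nodup.filter
  apply List.Nodup.map
  · intro a b hab
    dsimp at hab
    omega
  · exact List.nodup_range

lemma psum (m n g : ℤ) (hm : 3 ≤ m) (hm5 : m ≠ 5) (hn : 2 ≤ n) :
    ∀ (a s : List ℤ), (∀ v ∈ a, n+1 ≤ v ∧ v ≤ 2*n+1 ∧ v ≠ g) → (∀ y ∈ s, IsGP m y) →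
    ((List.zipWith (· * ·) a s).sum = 0 ∨
      (n+1 ≤ (List.zipWith (· * ·) a s).sum ∧ (List.zipWith (· * ·) a s).sum ≤ 2*n+1 ∧
        (List.zipWith (· * ·) a s).sum ≠ g) ∨
      2*n+2 ≤ (List.zipWith (· * ·) a s).sum) := by
  intro a
  induction a with
  | nil => intro s _ _; simp
  | cons v a ih =>
      intro s ha hs
      cases s with
      | nil => simp
      | cons y t =>
          simp only [List.zipWith_cons_cons, List.sum_cons]
          have hv := ha v (List.mem_cons_self)
          have hy := isGP_cases hm hm5 (hs y (List.mem_cons_self))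
          have ihp := ih t (fun w hw => ha w (List.mem_cons_of_mem v hw))
            (fun w hw => hs w (List.mem_cons_of_mem y hw))
          have hterm : v*y = 0 ∨ v*y = v ∨ 3*(n+1) ≤ v*y := by
            rcases hy with rfl|rfl|h3
            · left; ring
            · right; left; ring
            · right; right; nlinarith [hv.1]
          obtain ⟨hv1, hv2, hv3⟩ := hv
          rcases hterm with h|h|h <;> rcases ihp with h2|⟨h2a,h2b,h2c⟩|h2 <;> omega

lemma hQaux (m n g : ℤ) (hm : 3 ≤ m) (hm5 : m ≠ 5) (hn : 2 ≤ n) (bn t : List ℤ)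
    (hbn : bn = [] ∨ (bn = [n] ∧ g ≠ n)) (hgp : ∀ y ∈ t, IsGP m y) :
    (List.zipWith (· * ·) bn t).sum = 0 ∨ ((List.zipWith (· * ·) bn t).sum = n ∧ g ≠ n) ∨
      3*n ≤ (List.zipWith (· * ·) bn t).sum := by
  rcases hbn with rfl | ⟨rfl, hgn⟩
  · left; simp
  · cases t with
    | nil => left; simp
    | cons y t' =>
        have hy := isGP_cases hm hm5 (hgp y (List.mem_cons_self))
        simp only [List.zipWith_cons_cons, List.zipWith_nil_left, List.sum_cons, List.sum_nil,
          add_zero]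
        rcases hy with rfl|rfl|h3
        · left; ring
        · right; left; exact ⟨by ring, hgn⟩
        · right; right; nlinarith

/-- For `m ≥ 3`, `m ≠ 5` and `n ≥ 2`: for every `g` with `n ≤ g ≤ 2n` there is a sequence
`b` of positive integers with `R'(b) = T(n) \ {g}`. -/
theorem almost_universal_exists (m : ℤ) (hm : 3 ≤ m) (hm5 : m ≠ 5)
    (n : ℤ) (hn : 2 ≤ n) (g : ℤ) (hg1 : n ≤ g) (hg2 : g ≤ 2 * n) :
    ∃ b : List ℤ, (∀ x ∈ b, 0 < x) ∧ Rset m b = Set.Ici n \ {g} := by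
  classical
  set k : ℕ := (2*m+3).toNat with hkdef
  have hk : 2*m + 3 ≤ (k:ℤ) := by omega
  set bn : List ℤ := if g = n then [] else [n] with hbn
  set blocks : List ℤ := (NNlist n g).flatMap (fun v => List.replicate k v) with hblocks
  refine ⟨bn ++ blocks, ?_, ?_⟩
  · intro x hx
    rcases List.mem_append.1 hx with h | h
    · rw [hbn] at h
      split_ifs at h with hgn
      · simp at h
      · rw [List.mem_singleton] at h
        omega
    · rw [hblocks] at h
      obtain ⟨v, hv, hx'⟩ := List.mem_flatMap.1 h
      rw [List.eq_of_mem_replicate hx']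
      have := (mem_NNlist n g hn v).1 hv
      omega
  · ext x
    simp only [Rset, Set.mem_setOf_eq, Set.mem_diff, Set.mem_Ici, Set.mem_singleton_iff]
    constructor
    · rintro ⟨hx0, s, hlen, hgp, hsum⟩
      have hlenb : s.length = bn.length + blocks.length := by
        rw [hlen, List.length_append]
      have hl1 : (s.take bn.length).length = bn.length := by
        rw [List.length_take]; omega
      have hs : s.take bn.length ++ s.drop bn.length = s := List.take_append_drop _ _
      rw [← hs, List.zipWith_append hl1.symm, List.sum_append] at hsum
      set S1 := (List.zipWith (· * ·) bn (s.take bn.length)).sum with hS1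
      set S2 := (List.zipWith (· * ·) blocks (s.drop bn.length)).sum with hS2
      have hQ : S1 = 0 ∨ (S1 = n ∧ g ≠ n) ∨ 3*n ≤ S1 := by
        rw [hS1]
        exact hQaux m n g hm hm5 hn bn (s.take bn.length)
          (by rw [hbn]; split_ifs with hgn; exacts [Or.inl rfl, Or.inr ⟨rfl, hgn⟩])
          (fun w hw => hgp w (List.take_subset _ _ hw))
      have hP := psum m n g hm hm5 hn blocks (s.drop bn.length)
        (by
          intro v hv
          rw [hblocks] at hv
          obtain ⟨w, hw, hv'⟩ := List.mem_flatMap.1 hv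
          rw [List.eq_of_mem_replicate hv']
          exact (mem_NNlist n g hn w).1 hw)
        (fun w hw => hgp w (List.drop_subset _ _ hw))
      rw [← hS2] at hP
      rcases hQ with h1|⟨h1,hgn⟩|h1 <;> rcases hP with h2|⟨h2a,h2b,h2c⟩|h2 <;>
        constructor <;> omega
    · rintro ⟨hxn, hxg⟩
      obtain ⟨e, q1, q2, q3, a2, a3, he, hq1, hq2, hq3, ha2, ha3, hxeq⟩ :=
        arith n g x hn hg1 hg2 hxn hxg
      have hm21 : (2*n+1) ∈ NNlist n g := (mem_NNlist n g hn _).2 ⟨by omega, by omega, by omega⟩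
      have hma2 : a2 ∈ NNlist n g := (mem_NNlist n g hn _).2 ha2
      have hma3 : a3 ∈ NNlist n g := (mem_NNlist n g hn _).2 ha3
      set f : ℤ → ℤ := fun v => q1 * (if v = 2*n+1 then 1 else 0) +
        (q2 * (if v = a2 then 1 else 0) + q3 * (if v = a3 then 1 else 0)) with hf
      have hf0 : ∀ v ∈ NNlist n g, 0 ≤ f v := by
        intro v _
        rw [hf]
        have A : (0:ℤ) ≤ q1 * (if v = 2*n+1 then 1 else 0) := by
          split_ifs
          · simpa using hq1
          · simp
        have B : (0:ℤ) ≤ q2 * (if v = a2 then 1 else 0) := by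
          split_ifs
          · simpa using hq2
          · simp
        have C : (0:ℤ) ≤ q3 * (if v = a3 then 1 else 0) := by
          split_ifs
          · simpa using hq3
          · simp
        positivity
      have hrep2 := repL_flatMap m hm k hk (NNlist n g) f hf0
      have hsumval : ((NNlist n g).map (fun v => v * f v)).sum = q1*(2*n+1) + (q2*a2 + q3*a3) := by
        have e1 : (fun v => v * f v) = (fun v => v * (q1 * (if v = 2*n+1 then 1 else 0)) +
            (v * (q2 * (if v = a2 then 1 else 0)) + v * (q3 * (if v = a3 then 1 else 0)))) := by
          funext v; rw [hf]; ring
        rw [e1, sum_map_add, sum_map_add,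
          sum_ind q1 (2*n+1) _ (nodup_NNlist n g) hm21,
          sum_ind q2 a2 _ (nodup_NNlist n g) hma2,
          sum_ind q3 a3 _ (nodup_NNlist n g) hma3]
      have hrepbn : RepL m bn e := by
        rcases he with rfl | ⟨rfl, hgn⟩
        · exact repL_zero m bn
        · rw [hbn, if_neg (fun h => hgn h)]
          exact ⟨[1], rfl, by
            intro y hy
            rw [List.mem_singleton] at hy
            rw [hy]; exact isGP_one m, by simp⟩
      have h2 := repL_append hrepbn (hsumval ▸ hrep2)
      obtain ⟨sl, hs1, hs2, hs3⟩ := h2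
      exact ⟨by omega, sl, hs1, hs2, by rw [hxeq]; linarith [hs3]⟩
end
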